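/- Given the noise-free two-element system Θ_α + 2πN_α = k(z + y_α²/(2z)), Θ_β + 2πN_β = k(z + y_β²/(2z)) with N_β − N_α = 0 when Θ_β > Θ_α and N_β − N_α = 1 when Θ_β ≤ Θ_α, the unknown z > 0 is uniquely recovered as z = k(y_β² − y_α²)/(2(Θ_β − Θ_α)) if Θ_β > Θ_α, and z = k(y_β² − y_α²)/(2(Θ_β − Θ_α + 2π)) if Θ_β ≤ Θ_α. -/
import Mathlib


theorem position_recovery_from_phases (yα yβ k z : ℝ) (Θα Θβ : ℝ) (Nα Nβ : ℤ)
    (hy : yα < yβ) (hk : 0 < k) (hz : 0 < z)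
    (hΘα : Θα ∈ Set.Ico 0 (2 * Real.pi)) (hΘβ : Θβ ∈ Set.Ico 0 (2 * Real.pi))
    (hα : Θα + 2 * Real.pi * Nα = k * (z + yα ^ 2 / (2 * z)))
    (hβ : Θβ + 2 * Real.pi * Nβ = k * (z + yβ ^ 2 / (2 * z)))
    (hN0 : Θβ > Θα → Nβ - Nα = 0) (hN1 : Θβ ≤ Θα → Nβ - Nα = 1) :
    (Θβ > Θα → z = k * (yβ ^ 2 - yα ^ 2) / (2 * (Θβ - Θα))) ∧
    (Θβ ≤ Θα → z = k * (yβ ^ 2 - yα ^ 2) / (2 * (Θβ - Θα + 2 * Real.pi))) := by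
  have hz' : (2 : ℝ) * z ≠ 0 := by positivity
  have key : Θβ - Θα + 2 * Real.pi * ((Nβ : ℝ) - Nα) = k * (yβ ^ 2 - yα ^ 2) / (2 * z) := by
    field_simp at hα hβ ⊢
    linarith
  constructor
  · intro h
    have h0 : Nβ - Nα = 0 := hN0 h
    have h0' : (Nβ : ℝ) - Nα = 0 := by exact_mod_cast congrArg (Int.cast : ℤ → ℝ) h0
    rw [h0'] at key
    have hd : Θβ - Θα > 0 := by linarith
    field_simp at key ⊢
    linarith [key]
  · intro h
    have h1 : Nβ - Nα = 1 := hN1 h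
    have h1' : (Nβ : ℝ) - Nα = 1 := by exact_mod_cast congrArg (Int.cast : ℤ → ℝ) h1
    rw [h1'] at key
    have hd : Θβ - Θα + 2 * Real.pi > 0 := by
      have := hΘα.2; have := hΘβ.1; linarith
    field_simp at key ⊢
    linarith [key]
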